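/- Let V = ℂ³ with basis {h | v₁, v₂} (h even; v₁, v₂ odd), bracket [v₁,v₂] = h, and α the even map with α(h) = μ₁₂μ₂₁ h, α(v₁) = μ₂₁ v₂, α(v₂) = μ₁₂ v₁ (off-diagonal on the odd part), μ₁₂μ₂₁ ≠ 0, μ₁₂μ₂₁ ≠ 1. Then: (i) (V,[·,·],α) is a multiplicative Hom-Lie superalgebra; (ii) every even 1-cocycle is a multiple of the map ψ₀ with ψ₀(h) = 2h, ψ₀(v₁) = v₁, ψ₀(v₂) = v₂, plus a coboundary; hence dim H¹(g,g) = 1. -/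
import Mathlib


namespace Stmt16

/-- V = ℂ³ with basis h = e₀ (even), v₁ = e₁, v₂ = e₂ (odd). -/
abbrev V : Type := Fin 3 → ℂ

def hom (p : Bool) (x : V) : Prop := if p then x 0 = 0 else (x 1 = 0 ∧ x 2 = 0)

def sg (b : Bool) : ℂ := if b then -1 else 1

/-- bracket: [v₁,v₂] = [v₂,v₁] = h, others zero. -/
def br (x y : V) : V := ![x 1 * y 2 + x 2 * y 1, 0, 0]

/-- α(h) = μ₁₂μ₂₁·h, α(v₁) = μ₂₁·v₂, α(v₂) = μ₁₂·v₁. -/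
def al (μ12 μ21 : ℂ) (x : V) : V := ![μ12 * μ21 * x 0, μ12 * x 2, μ21 * x 1]

def IsLin (f : V → V) : Prop := ∀ (c : ℂ) (x y : V), f (c • x + y) = c • f x + f y

def IsEven (f : V → V) : Prop := ∀ (p : Bool) (x : V), hom p x → hom p (f x)

/-- the representative even 1-cocycle ψ₀ : h ↦ 2h, v₁ ↦ v₁, v₂ ↦ v₂. -/
def ψ0 (x : V) : V := ![2 * x 0, x 1, x 2]

/-- coboundary of a 0-cochain z ∈ C⁰_α: δ⁰z(y) = -[y,z]. -/
def D0 (z : V) (y : V) : V := -(br y z)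

/-- δ¹ψ on homogeneous x, y for an even ψ. -/
def d1 (ψ : V → V) (px py : Bool) (x y : V) : V :=
  -(ψ (br x y)) + br x (ψ y) - sg (py && px) • br y (ψ x)

theorem stmt16 (μ12 μ21 : ℂ) (h1 : μ12 * μ21 ≠ 0) (h2 : μ12 * μ21 ≠ 1) :
    -- (i) a multiplicative Hom-Lie superalgebra:
    (∀ x y : V, al μ12 μ21 (br x y) = br (al μ12 μ21 x) (al μ12 μ21 y)) ∧
    (∀ (px py pz : Bool) (x y z : V), hom px x → hom py y → hom pz z →
      sg (px && pz) • br (al μ12 μ21 x) (br y z)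
        + sg (py && px) • br (al μ12 μ21 y) (br z x)
        + sg (pz && py) • br (al μ12 μ21 z) (br x y) = 0) ∧
    -- (ii) ψ₀ is an even 1-cocycle which is not a coboundary …
    IsLin ψ0 ∧ IsEven ψ0 ∧
    (∀ x : V, al μ12 μ21 (ψ0 x) = ψ0 (al μ12 μ21 x)) ∧
    (∀ (px py : Bool) (x y : V), hom px x → hom py y → d1 ψ0 px py x y = 0) ∧
    (¬ ∃ z : V, al μ12 μ21 z = z ∧ ∀ y : V, ψ0 y = D0 z y) ∧
    -- … and every even 1-cocycle is a multiple of ψ₀ plus a coboundary,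
    -- hence dim H¹(g,g) = 1.
    (∀ ψ : V → V, IsLin ψ → IsEven ψ →
      (∀ x : V, al μ12 μ21 (ψ x) = ψ (al μ12 μ21 x)) →
      (∀ (px py : Bool) (x y : V), hom px x → hom py y → d1 ψ px py x y = 0) →
      ∃ (c : ℂ) (z : V), al μ12 μ21 z = z ∧ ∀ y : V, ψ y = c • ψ0 y + D0 z y) := by
  have hμ21 : μ21 ≠ 0 := by
    intro h; apply h1; rw [h, mul_zero]
  refine ⟨?_, ?_, ?_, ?_, ?_, ?_, ?_, ?_⟩
  · intro x y
    funext i; fin_cases i <;> simp [al, br] <;> ring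
  · intro px py pz x y z _ _ _
    funext i; fin_cases i <;> simp [al, br, sg] <;> split <;> ring
  · intro c x y
    funext i; fin_cases i <;> simp [ψ0] <;> ring
  · intro p x hx
    cases p <;> simp [hom, ψ0] at hx ⊢ <;> tauto
  · intro x
    funext i; fin_cases i <;> simp [al, ψ0] <;> ring
  · intro px py x y hx hy
    cases px <;> cases py <;> simp [hom] at hx hy <;>
      funext i <;> fin_cases i <;>
      first
      | (simp [d1, br, ψ0, sg, hx, hy]; try ring)
      | (obtain ⟨hx1, hx2⟩ := hx; simp [d1, br, ψ0, sg, hx1, hx2]; try ring)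
      | (obtain ⟨hy1, hy2⟩ := hy; simp [d1, br, ψ0, sg, hy1, hy2]; try ring)
      | (simp [d1, br, ψ0, sg]; ring)
  · rintro ⟨z, hz, hψ⟩
    have := congrFun (hψ ![1, 0, 0]) 0
    simp [ψ0, D0, br] at this
  · intro ψ hlin heven hcomm hcoc
    have h0 : ψ 0 = 0 := by
      have h := hlin 1 0 0
      simp at h
      exact h
    have h0' : ψ ![0, 0, 0] = 0 := by
      rw [show (![0, 0, 0] : V) = 0 by funext i; fin_cases i <;> simp]
      exact h0
    have hdec : ∀ x : V, ψ x =
        x 0 • ψ ![1, 0, 0] + (x 1 • ψ ![0, 1, 0] + (x 2 • ψ ![0, 0, 1] + ψ 0)) := by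
      intro x
      have hx : x = x 0 • ![1, 0, 0] + (x 1 • ![0, 1, 0] + (x 2 • ![0, 0, 1] + 0)) := by
        funext i; fin_cases i <;> simp
      conv_lhs => rw [hx]
      rw [hlin, hlin, hlin]
    have hE0 : (ψ ![1, 0, 0]) 1 = 0 ∧ (ψ ![1, 0, 0]) 2 = 0 := by
      have := heven false ![1, 0, 0] (by simp [hom])
      simpa [hom] using this
    have hE1 : (ψ ![0, 1, 0]) 0 = 0 := by
      have := heven true ![0, 1, 0] (by simp [hom])
      simpa [hom] using this
    have hE2 : (ψ ![0, 0, 1]) 0 = 0 := by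
      have := heven true ![0, 0, 1] (by simp [hom])
      simpa [hom] using this
    have hc : (ψ ![0, 1, 0]) 2 = 0 := by
      have := congrFun (hcoc true true ![0, 1, 0] ![0, 1, 0] (by simp [hom]) (by simp [hom])) 0
      simp [d1, sg, br, h0', Matrix.vecHead] at this
      exact this
    have hd : (ψ ![0, 0, 1]) 1 = 0 := by
      have := congrFun (hcoc true true ![0, 0, 1] ![0, 0, 1] (by simp [hom]) (by simp [hom])) 0
      simp [d1, sg, br, h0', Matrix.vecHead] at this
      exact this
    have hae : (ψ ![1, 0, 0]) 0 = (ψ ![0, 1, 0]) 1 + (ψ ![0, 0, 1]) 2 := by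
      have := congrFun (hcoc true true ![0, 1, 0] ![0, 0, 1] (by simp [hom]) (by simp [hom])) 0
      simp [d1, sg, br, Matrix.vecHead] at this
      linear_combination -this
    have heb : (ψ ![0, 0, 1]) 2 = (ψ ![0, 1, 0]) 1 := by
      have hcm := congrFun (hcomm ![0, 1, 0]) 2
      have hal1 : al μ12 μ21 ![0, 1, 0] = μ21 • ![0, 0, 1] + 0 := by
        funext i; fin_cases i <;> simp [al]
      rw [hal1, hlin, h0] at hcm
      simp only [al, Pi.add_apply, Pi.smul_apply, smul_eq_mul, add_zero, Pi.zero_apply,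
        Matrix.cons_val_two, Matrix.tail_cons, Matrix.head_cons] at hcm
      exact mul_left_cancel₀ hμ21 hcm.symm
    refine ⟨(ψ ![0, 1, 0]) 1, 0, by funext i; fin_cases i <;> simp [al], ?_⟩
    intro y
    have hD : D0 (0 : V) y = 0 := by
      funext i; fin_cases i <;> simp [D0, br]
    rw [hD, add_zero, hdec y, h0]
    funext i; fin_cases i <;>
      simp [ψ0, hE0.1, hE0.2, hE1, hE2, hc, hd, hae, heb] <;> ring
end Stmt16
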